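/- arXiv:2104.03532 — 2 statements merged into one kernel-verified Lean document; each statement's English description precedes it below -/
import Mathlib

section
/- (Lemma 3: Λ is an equivariant lift of the VIO dynamics.) Fix T_C = (R_C, x_C) ∈ SE(3), a state ξ = (P, v, p₁, …, pₙ) with qᵢ := (P T_C)⁻¹(pᵢ) ≠ 0 for all i, inputs Ω, a ∈ ℝ³, and gravity constant g. Set Ω_C := R_Cᵀ Ω and v_C := R_Cᵀ(v − x_C × Ω). Suppose A(t) = (R_A(t), x_A(t)) ∈ SE(3), w(t) ∈ ℝ³, and Qᵢ(t) = (R_{Qᵢ}(t), c_{Qᵢ}(t)) ∈ SOT(3) are differentiable curves with A(0) = (I, 0), w(0) = 0, Qᵢ(0) = (I, 1), and derivatives at t = 0 given by Ṙ_A(0) = Ω^×, ẋ_A(0) = v, ẇ(0) = −a + g R_Pᵀ e₃, Ṙ_{Qᵢ}(0) = (Ω_C + (qᵢ × v_C)/‖qᵢ‖²)^×, ċ_{Qᵢ}(0) = (qᵢᵀ v_C)/‖qᵢ‖². Then the curve t ↦ Φ((A(t), w(t), Qᵢ(t)), ξ) is differentiable at t = 0 with derivative equal to the VIO vector field at ξ: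 the rotation component has derivative R_P Ω^×, the translation component has derivative R_P v, the velocity component has derivative −Ω × v + a − g R_Pᵀ e₃, and each landmark component has derivative 0. -/
open scoped InnerProductSpace Matrix

noncomputable section

/-- Vectors in ℝ³ with the Euclidean norm. -/
abbrev V3 := EuclideanSpace ℝ (Fin 3)

abbrev Mat3 := Matrix (Fin 3) (Fin 3) ℝ

/-- `R ∈ SO(3)` iff `RᵀR = I` and `det R = 1`. -/
def SO3 (R : Mat3) : Prop := R.transpose * R = 1 ∧ R.det = 1

/-- Matrix-vector multiplication. -/
def mv (M : Mat3) (q : V3) : V3 := WithLp.toLp 2 (M.mulVec q)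

/-- The standard gravity direction `e₃ = (0,0,1)`. -/
def e3 : V3 := WithLp.toLp 2 ![0, 0, 1]

/-- Elements of SE(3) are pairs `(R, x)`. -/
abbrev SE3 := Mat3 × V3

/-- SE(3) group product: `(R₁,x₁)·(R₂,x₂) = (R₁R₂, x₁ + R₁x₂)`. -/
def seMul (P Q : SE3) : SE3 := (P.1 * Q.1, P.2 + mv P.1 Q.2)

/-- SE(3) identity `(I, 0)`. -/
def seId : SE3 := (1, 0)

/-- SE(3) inverse: `P⁻¹ = (Rᵀ, −Rᵀx)`. -/
def seInv (P : SE3) : SE3 := (P.1ᵀ, -(mv P.1ᵀ P.2))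

/-- Action of SE(3) on ℝ³: `P(q) = R_P q + x_P`. -/
def seAct (P : SE3) (q : V3) : V3 := mv P.1 q + P.2

/-- The subgroup `SE_{e₃}(3) = {(R,x) ∈ SE(3) : R e₃ = e₃}`. -/
def SEe3 : Set SE3 := {S | SO3 S.1 ∧ mv S.1 e3 = e3}

/-- The skew-symmetric matrix `Ω^×` with `Ω^× y = Ω × y`. -/
def skew (Ω : V3) : Mat3 := !![0, -Ω 2, Ω 1; Ω 2, 0, -Ω 0; -Ω 1, Ω 0, 0]

/-- The cross product on ℝ³. -/
def cross3 (a b : V3) : V3 := WithLp.toLp 2 (crossProduct a b)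

/-- Elements of SOT(3) are pairs `(R_Q, c_Q)`. -/
abbrev SOT3 := Mat3 × ℝ

/-- SOT(3) product `(R₁,c₁)·(R₂,c₂) = (R₁R₂, c₁c₂)`. -/
def sotMul (Q1 Q2 : SOT3) : SOT3 := (Q1.1 * Q2.1, Q1.2 * Q2.2)

/-- SOT(3) inverse `(R_Qᵀ, c_Q⁻¹)`. -/
def sotInv (Q : SOT3) : SOT3 := (Q.1ᵀ, Q.2⁻¹)

/-- Action of SOT(3) on ℝ³: `Q(q) = c_Q R_Q q`. -/
def sotAct (Q : SOT3) (q : V3) : V3 := Q.2 • mv Q.1 q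

/-- Elements of the VI-SLAM group `G = SE₂(3) × SOT(3)ⁿ`. -/
abbrev GVI (n : ℕ) := SE3 × V3 × (Fin n → SOT3)

/-- VI-SLAM group product. -/
def gMul {n : ℕ} (X Y : GVI n) : GVI n :=
  (seMul X.1 Y.1, X.2.1 + mv X.1.1 Y.2.1, fun i => sotMul (X.2.2 i) (Y.2.2 i))

/-- VI-SLAM group identity `(I₄, 0, (I,1)ᵢ)`. -/
def gId {n : ℕ} : GVI n := (seId, 0, fun _ => (1, 1))

/-- VI-SLAM group inverse `(A⁻¹, −R_Aᵀw, Qᵢ⁻¹)`. -/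
def gInv {n : ℕ} (X : GVI n) : GVI n :=
  (seInv X.1, -(mv X.1.1ᵀ X.2.1), fun i => sotInv (X.2.2 i))

/-- Membership in the VI-SLAM group: rotation parts in SO(3), scale parts positive. -/
def gMem {n : ℕ} (X : GVI n) : Prop :=
  SO3 X.1.1 ∧ ∀ i, SO3 (X.2.2 i).1 ∧ 0 < (X.2.2 i).2

/-- The action `Φ((A, w, Qᵢ), (P, v, pᵢ)) = (PA, R_Aᵀ(v − w), (P A T_C)(Qᵢ⁻¹((P T_C)⁻¹(pᵢ))))`. -/
def Phi {n : ℕ} (TC : SE3) (X : GVI n) (ξ : SE3 × V3 × (Fin n → V3)) :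
    SE3 × V3 × (Fin n → V3) :=
  (seMul ξ.1 X.1, mv X.1.1ᵀ (ξ.2.1 - X.2.1),
    fun i => seAct (seMul (seMul ξ.1 X.1) TC)
      (sotAct (sotInv (X.2.2 i)) (seAct (seInv (seMul ξ.1 TC)) (ξ.2.2 i))))

attribute [local instance] Matrix.normedAddCommGroup Matrix.normedSpace

section Helpers

-- mv algebra
lemma mv_add (M : Mat3) (a b : V3) : mv M (a + b) = mv M a + mv M b := by
  ext j; simp [mv, Matrix.mulVec_add]
lemma mv_smul' (M : Mat3) (c : ℝ) (a : V3) : mv M (c • a) = c • mv M a := by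
  ext j; simp [mv, Matrix.mulVec_smul]
lemma mv_neg (M : Mat3) (a : V3) : mv M (-a) = -mv M a := by
  have := mv_smul' M (-1) a; simpa using this
lemma mv_sub (M : Mat3) (a b : V3) : mv M (a - b) = mv M a - mv M b := by
  rw [sub_eq_add_neg, mv_add, mv_neg, sub_eq_add_neg]
lemma mv_zero (M : Mat3) : mv M (0 : V3) = 0 := by
  have := mv_smul' M 0 0; simpa using this
lemma mv_one (y : V3) : mv 1 y = y := by simp [mv]
lemma mv_mul (M N : Mat3) (y : V3) : mv (M * N) y = mv M (mv N y) := by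
  simp [mv, Matrix.mulVec_mulVec]
lemma mv_smul (M : Mat3) (c : ℝ) (a : V3) : mv M (c • a) = c • mv M a := by
  ext j; simp [mv, Matrix.mulVec_smul]

lemma skew_mv (Ω y : V3) : mv (skew Ω) y = cross3 Ω y := by
  ext j
  fin_cases j <;>
    simp [mv, skew, cross3, crossProduct, Matrix.mulVec, dotProduct,
      Fin.sum_univ_three] <;> ring

lemma skew_transpose_mv (Ω y : V3) : mv (skew Ω)ᵀ y = -cross3 Ω y := by
  ext j
  fin_cases j <;>
    simp [mv, skew, cross3, crossProduct, Matrix.mulVec, dotProduct,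
      Fin.sum_univ_three, Matrix.transpose] <;> ring

lemma cross3_anticomm (a b : V3) : cross3 a b = -cross3 b a := by
  ext j; fin_cases j <;> simp [cross3, crossProduct] <;> ring

lemma cross3_add_left (a b c : V3) : cross3 (a + b) c = cross3 a c + cross3 b c := by
  ext j; fin_cases j <;> simp [cross3, crossProduct] <;> ring

lemma cross3_smul_left (r : ℝ) (a c : V3) : cross3 (r • a) c = r • cross3 a c := by
  ext j; fin_cases j <;> simp [cross3, crossProduct] <;> ring

lemma inner_eq_sum (a b : V3) : ⟪a, b⟫_ℝ = ∑ i, a i * b i := by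
  simp [PiLp.inner_apply, mul_comm]

lemma lagrange (q vC : V3) :
    cross3 (cross3 q vC) q = ⟪q, q⟫_ℝ • vC - ⟪q, vC⟫_ℝ • q := by
  rw [inner_eq_sum, inner_eq_sum]
  ext j
  fin_cases j <;>
    simp [cross3, crossProduct, inner_eq_sum, Fin.sum_univ_three, PiLp.smul_apply,
      smul_eq_mul] <;> ring

lemma SO3_adj {R : Mat3} (hR : SO3 R) : R.adjugate = Rᵀ := by
  have h1 : R * R.adjugate = 1 := by
    rw [Matrix.mul_adjugate, hR.2]; simp
  calc R.adjugate = (Rᵀ * R) * R.adjugate := by rw [hR.1, one_mul]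
    _ = Rᵀ * (R * R.adjugate) := by rw [Matrix.mul_assoc]
    _ = Rᵀ := by rw [h1, Matrix.mul_one]

lemma cross_mv (M : Mat3) (a b : V3) :
    cross3 (mv M a) (mv M b) = mv M.adjugateᵀ (cross3 a b) := by
  ext j
  fin_cases j <;>
    simp [cross3, crossProduct, mv, Matrix.mulVec, dotProduct, Fin.sum_univ_three,
      Matrix.adjugate_fin_three, Matrix.transpose] <;> ring

lemma SO3_cross (R : Mat3) (hR : SO3 R) (a b : V3) :
    mv R (cross3 a b) = cross3 (mv R a) (mv R b) := by
  rw [cross_mv, SO3_adj hR, Matrix.transpose_transpose]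

lemma SO3_mul_transpose {R : Mat3} (hR : SO3 R) : R * Rᵀ = 1 :=
  mul_eq_one_comm.mp hR.1

lemma mv_RRT {R : Mat3} (hR : SO3 R) (y : V3) : mv R (mv Rᵀ y) = y := by
  rw [← mv_mul, SO3_mul_transpose hR, mv_one]

-- CLM machinery
def mulVecL (M : Mat3) : V3 →L[ℝ] V3 :=
  LinearMap.toContinuousLinearMap
    { toFun := fun x => mv M x
      map_add' := fun x y => mv_add M x y
      map_smul' := fun c x => mv_smul M c x }

@[simp] lemma mulVecL_apply (M : Mat3) (x : V3) : mulVecL M x = mv M x := rfl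

def mulVecCLM : Mat3 →L[ℝ] (V3 →L[ℝ] V3) :=
  LinearMap.toContinuousLinearMap
    { toFun := mulVecL
      map_add' := fun M N => by ext x; simp [Matrix.add_mulVec, mv]
      map_smul' := fun c M => by ext x; simp [mv, Matrix.smul_mulVec] }

@[simp] lemma mulVecCLM_apply (M : Mat3) (x : V3) : mulVecCLM M x = mv M x := rfl

lemma HasDerivAt.mv' {M : ℝ → Mat3} {M' : Mat3} {u : ℝ → V3} {u' : V3} {x : ℝ}
    (hM : HasDerivAt M M' x) (hu : HasDerivAt u u' x) :
    HasDerivAt (fun t => mv (M t) (u t)) (mv M' (u x) + mv (M x) u') x := by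
  have h1 : HasDerivAt (fun t => mulVecCLM (M t)) (mulVecCLM M') x :=
    mulVecCLM.hasFDerivAt.comp_hasDerivAt x hM
  simpa using h1.clm_apply hu

lemma HasDerivAt.constmv {M : Mat3} {u : ℝ → V3} {u' : V3} {x : ℝ}
    (hu : HasDerivAt u u' x) :
    HasDerivAt (fun t => mv M (u t)) (mv M u') x := by
  exact (mulVecL M).hasFDerivAt.comp_hasDerivAt x hu

def transCLM : Mat3 →L[ℝ] Mat3 :=
  LinearMap.toContinuousLinearMap
    { toFun := fun M => Mᵀ
      map_add' := fun M N => Matrix.transpose_add M N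
      map_smul' := fun c M => Matrix.transpose_smul c M }

lemma HasDerivAt.mtrans {M : ℝ → Mat3} {M' : Mat3} {x : ℝ} (hM : HasDerivAt M M' x) :
    HasDerivAt (fun t => (M t)ᵀ) M'ᵀ x :=
  transCLM.hasFDerivAt.comp_hasDerivAt x hM

lemma HasDerivAt.constMul {A : Mat3} {M : ℝ → Mat3} {M' : Mat3} {x : ℝ}
    (hM : HasDerivAt M M' x) : HasDerivAt (fun t => A * M t) (A * M') x :=
  (LinearMap.toContinuousLinearMap (LinearMap.mulLeft ℝ A)).hasFDerivAt.comp_hasDerivAt x hM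

lemma HasDerivAt.mulConst {A : Mat3} {M : ℝ → Mat3} {M' : Mat3} {x : ℝ}
    (hM : HasDerivAt M M' x) : HasDerivAt (fun t => M t * A) (M' * A) x :=
  (LinearMap.toContinuousLinearMap (LinearMap.mulRight ℝ A)).hasFDerivAt.comp_hasDerivAt x hM

end Helpers

/-- (Lemma 3: `Λ` is an equivariant lift of the VIO dynamics.)
For curves in the VI-SLAM group through the identity whose derivatives at `t = 0` are
given by the lift `Λ`, the curve `t ↦ Φ((A(t), w(t), Qᵢ(t)), ξ)` has derivative at
`t = 0` equal to the VIO vector field at `ξ`. -/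
theorem lift_Lambda (n : ℕ) (hn : 1 ≤ n) (TC : SE3) (hTC : SO3 TC.1) (g : ℝ)
    (P : SE3) (hP : SO3 P.1) (v : V3) (p : Fin n → V3) (Ω a : V3)
    (q : Fin n → V3) (hqdef : ∀ i, q i = seAct (seInv (seMul P TC)) (p i))
    (hq0 : ∀ i, q i ≠ 0)
    (ΩC vC : V3) (hΩC : ΩC = mv TC.1ᵀ Ω) (hvC : vC = mv TC.1ᵀ (v - cross3 TC.2 Ω))
    (RA : ℝ → Mat3) (xA : ℝ → V3) (w : ℝ → V3)
    (RQ : Fin n → ℝ → Mat3) (cQ : Fin n → ℝ → ℝ)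
    (hASO : ∀ t, SO3 (RA t)) (hQSO : ∀ i t, SO3 (RQ i t)) (hcpos : ∀ i t, 0 < cQ i t)
    (hRA0 : RA 0 = 1) (hxA0 : xA 0 = 0) (hw0 : w 0 = 0)
    (hRQ0 : ∀ i, RQ i 0 = 1) (hcQ0 : ∀ i, cQ i 0 = 1)
    (hRA : HasDerivAt RA (skew Ω) 0)
    (hxA : HasDerivAt xA v 0)
    (hw : HasDerivAt w (-a + g • mv P.1ᵀ e3) 0)
    (hRQ : ∀ i, HasDerivAt (RQ i) (skew (ΩC + (‖q i‖ ^ 2)⁻¹ • cross3 (q i) vC)) 0)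
    (hcQ : ∀ i, HasDerivAt (cQ i) (⟪q i, vC⟫_ℝ / ‖q i‖ ^ 2) 0) :
    HasDerivAt (fun t => (Phi TC (((RA t, xA t) : SE3), w t, fun i => ((RQ i t, cQ i t) : SOT3))
        ((P, v, p) : SE3 × V3 × (Fin n → V3))).1.1) (P.1 * skew Ω) 0 ∧
    HasDerivAt (fun t => (Phi TC (((RA t, xA t) : SE3), w t, fun i => ((RQ i t, cQ i t) : SOT3))
        ((P, v, p) : SE3 × V3 × (Fin n → V3))).1.2) (mv P.1 v) 0 ∧
    HasDerivAt (fun t => (Phi TC (((RA t, xA t) : SE3), w t, fun i => ((RQ i t, cQ i t) : SOT3))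
        ((P, v, p) : SE3 × V3 × (Fin n → V3))).2.1)
      (-cross3 Ω v + a - g • mv P.1ᵀ e3) 0 ∧
    ∀ i : Fin n, HasDerivAt (fun t => (Phi TC (((RA t, xA t) : SE3), w t, fun j => ((RQ j t, cQ j t) : SOT3))
        ((P, v, p) : SE3 × V3 × (Fin n → V3))).2.2 i) 0 0 := by
  have hconstMul : ∀ (A : Mat3) {M : ℝ → Mat3} {M' : Mat3} {x : ℝ},
      HasDerivAt M M' x → HasDerivAt (fun t => A * M t) (A * M') x := fun A _ _ x h => h.constMul
  refine ⟨?_, ?_, ?_, ?_⟩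
  · show HasDerivAt (fun t => P.1 * RA t) (P.1 * skew Ω) 0
    exact hRA.constMul
  · show HasDerivAt (fun t => P.2 + mv P.1 (xA t)) (mv P.1 v) 0
    exact (hxA.constmv).const_add P.2
  · show HasDerivAt (fun t => mv (RA t)ᵀ (v - w t)) (-cross3 Ω v + a - g • mv P.1ᵀ e3) 0
    have h1 := (hRA.mtrans).mv' (hw.const_sub v)
    rw [hRA0, hw0, Matrix.transpose_one, mv_one, sub_zero, skew_transpose_mv] at h1
    convert h1 using 1
    module
  · intro i
    show HasDerivAt (fun t =>
        mv (P.1 * RA t * TC.1)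
          ((cQ i t)⁻¹ • mv (RQ i t)ᵀ (seAct (seInv (seMul P TC)) (p i)))
        + (P.2 + mv P.1 (xA t) + mv (P.1 * RA t) TC.2)) 0 0
    simp only [← hqdef]
    have hnq : (‖q i‖ ^ 2 : ℝ) ≠ 0 := pow_ne_zero 2 (norm_ne_zero_iff.mpr (hq0 i))
    have hc1 : cQ i 0 ≠ 0 := by rw [hcQ0 i]; exact one_ne_zero
    have hc : HasDerivAt (fun t => (cQ i t)⁻¹) (-(⟪q i, vC⟫_ℝ / ‖q i‖ ^ 2)) 0 := by
      have h := (hcQ i).inv hc1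
      rw [hcQ0 i] at h
      simp at h; exact h
    have hMq : HasDerivAt (fun t => mv (RQ i t)ᵀ (q i))
        (mv (skew (ΩC + (‖q i‖ ^ 2)⁻¹ • cross3 (q i) vC))ᵀ (q i)) 0 := by
      have h := ((hRQ i).mtrans).mv' (hasDerivAt_const (0 : ℝ) (q i))
      simpa [mv_zero] using h
    have hSkew : mv (skew (ΩC + (‖q i‖ ^ 2)⁻¹ • cross3 (q i) vC))ᵀ (q i)
        = -cross3 ΩC (q i) - vC + (⟪q i, vC⟫_ℝ / ‖q i‖ ^ 2) • q i := by
      rw [skew_transpose_mv, cross3_add_left, cross3_smul_left, lagrange,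
        real_inner_self_eq_norm_sq]
      match_scalars <;> field_simp [norm_ne_zero_iff.mpr (hq0 i)]
    have hu := hc.smul hMq
    rw [hcQ0 i, hRQ0 i, Matrix.transpose_one, mv_one, inv_one, one_smul, hSkew] at hu
    have hu2 : HasDerivAt (fun t => (cQ i t)⁻¹ • mv (RQ i t)ᵀ (q i))
        (-cross3 ΩC (q i) - vC) 0 := by
      refine hu.congr_deriv ?_
      module
    have hmat : HasDerivAt (fun t => P.1 * RA t * TC.1) (P.1 * skew Ω * TC.1) 0 :=
      (hRA.constMul).mulConst
    have hxp : HasDerivAt (fun t => P.2 + mv P.1 (xA t)) (mv P.1 v) 0 :=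
      (hxA.constmv).const_add P.2
    have hrt : HasDerivAt (fun t => mv (P.1 * RA t) TC.2) (mv (P.1 * skew Ω) TC.2) 0 := by
      have h := (hconstMul P.1 hRA).mv' (hasDerivAt_const (0 : ℝ) TC.2)
      simpa [mv_zero] using h
    have h := (hmat.mv' hu2).add (hxp.add hrt)
    rw [hRQ0 i, hcQ0 i, hRA0, mul_one, Matrix.transpose_one, mv_one, inv_one, one_smul] at h
    have key : mv (P.1 * skew Ω * TC.1) (q i) + mv (P.1 * TC.1) (-cross3 ΩC (q i) - vC)
        + (mv P.1 v + mv (P.1 * skew Ω) TC.2) = 0 := by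
      have h4 : mv TC.1 (cross3 ΩC (q i)) = cross3 Ω (mv TC.1 (q i)) := by
        rw [SO3_cross TC.1 hTC, hΩC, mv_RRT hTC]
      have h5 : mv TC.1 vC = v - cross3 TC.2 Ω := by rw [hvC, mv_RRT hTC]
      rw [mv_mul (P.1 * skew Ω) TC.1, mv_mul P.1 (skew Ω), skew_mv,
        mv_mul P.1 TC.1, mv_sub, mv_neg, h4, h5,
        mv_mul P.1 (skew Ω) TC.2, skew_mv]
      have inner0 : cross3 Ω (mv TC.1 (q i)) + (-cross3 Ω (mv TC.1 (q i)) - (v - cross3 TC.2 Ω))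
          + (v + cross3 Ω TC.2) = 0 := by
        rw [cross3_anticomm TC.2 Ω]; abel
      rw [← mv_add, ← mv_add, ← mv_add, inner0, mv_zero]
    rw [key] at h
    exact h
end
end

section
/- (Invariance of the lift Λ, well-definedness on the quotient, Lemma 3.) The lift Λ is invariant under the action α: for every S ∈ SE_{e₃}(3), every state (P, v, pᵢ) with (P T_C)⁻¹(pᵢ) ≠ 0 for all i, and inputs Ω, a ∈ ℝ³, the components of Λ evaluated at α(S, (P, v, pᵢ)) agree with those at (P, v, pᵢ): the SE(3) component U(Ω, v) is unchanged, the bias component satisfies −a + g (R_Sᵀ R_P)ᵀ e₃ = −a + g R_Pᵀ e₃, and the camera-frame landmark coordinates satisfy ((S⁻¹P) T_C)⁻¹(S⁻¹(pᵢ)) = (P T_C)⁻¹(pᵢ), so that the SOT(3) components (Ω_C + (qᵢ × v_C)/‖qᵢ‖², (qᵢᵀ v_C)/‖qᵢ‖²) are unchanged. -/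
open scoped InnerProductSpace Matrix

noncomputable section

/-- The change-of-reference-frame action `α(S, (P, v, pᵢ)) = (S⁻¹P, v, S⁻¹(pᵢ))`. -/
def alpha (n : ℕ) (S : SE3) (ξ : SE3 × V3 × (Fin n → V3)) : SE3 × V3 × (Fin n → V3) :=
  (seMul (seInv S) ξ.1, ξ.2.1, fun i => seAct (seInv S) (ξ.2.2 i))

/-- The equivariant lift `Λ((P, v, pᵢ), (Ω, a))`, valued in
`se(3) × ℝ³ × (so(3) × ℝ)ⁿ ≅ 𝔤`: the `se(3)` component is `U(Ω, v) = (Ω^×, v)`, the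
bias component is `−a + g R_Pᵀ e₃`, and the `i`-th `sot(3)` component is
`((Ω_C + (qᵢ × v_C)/‖qᵢ‖²)^×, (qᵢᵀ v_C)/‖qᵢ‖²)` with `qᵢ = (P T_C)⁻¹(pᵢ)`. -/
def Lam (n : ℕ) (TC : SE3) (g : ℝ) (ξ : SE3 × V3 × (Fin n → V3)) (Ω a : V3) :
    (Mat3 × V3) × V3 × (Fin n → Mat3 × ℝ) :=
  ((skew Ω, ξ.2.1),
   -a + g • mv ξ.1.1ᵀ e3,
   fun i =>
     let q : V3 := seAct (seInv (seMul ξ.1 TC)) (ξ.2.2 i)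
     let ΩC : V3 := mv TC.1ᵀ Ω
     let vC : V3 := mv TC.1ᵀ (ξ.2.1 - cross3 TC.2 Ω)
     (skew (ΩC + (‖q‖ ^ 2)⁻¹ • cross3 q vC), ⟪q, vC⟫_ℝ / ‖q‖ ^ 2))


/-- `mulVec` distributes over `V3` addition (PiLp instance). -/
lemma mv_add' (A : Mat3) (x y : V3) : A.mulVec (x + y) = A.mulVec x + A.mulVec y :=
  Matrix.mulVec_add A x y

lemma mv_sub' (A : Mat3) (x y : V3) : A.mulVec (x - y) = A.mulVec x - A.mulVec y :=
  Matrix.mulVec_sub A x y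

lemma mv_neg' (A : Mat3) (x : V3) : A.mulVec (-x) = -A.mulVec x :=
  Matrix.mulVec_neg _ _

/-- (Invariance of the lift `Λ`, Lemma 3.) `Λ` is invariant under the
action `α`: the bias component satisfies `−a + g(R_SᵀR_P)ᵀe₃ = −a + gR_Pᵀe₃`, the
camera-frame landmark coordinates satisfy `((S⁻¹P)T_C)⁻¹(S⁻¹(pᵢ)) = (P T_C)⁻¹(pᵢ)`,
and hence `Λ(α(S, ξ), (Ω, a)) = Λ(ξ, (Ω, a))`. -/
theorem Lambda_invariant (n : ℕ) (hn : 1 ≤ n) (TC : SE3) (hTC : SO3 TC.1) (g : ℝ)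
    (S : SE3) (hS : S ∈ SEe3)
    (ξ : SE3 × V3 × (Fin n → V3)) (hP : SO3 ξ.1.1)
    (hq : ∀ i, seAct (seInv (seMul ξ.1 TC)) (ξ.2.2 i) ≠ 0)
    (Ω a : V3) :
    (-a + g • mv ((seMul (seInv S) ξ.1).1)ᵀ e3 = -a + g • mv ξ.1.1ᵀ e3) ∧
    (∀ i, seAct (seInv (seMul (seMul (seInv S) ξ.1) TC)) (seAct (seInv S) (ξ.2.2 i))
        = seAct (seInv (seMul ξ.1 TC)) (ξ.2.2 i)) ∧
    Lam n TC g (alpha n S ξ) Ω a = Lam n TC g ξ Ω a := by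
  obtain ⟨⟨hS1, hSdet⟩, hSe3⟩ := hS
  have hSS : S.1 * S.1ᵀ = 1 := mul_eq_one_comm.mp hS1
  simp only [mv] at hSe3
  replace hSe3 : S.1 *ᵥ e3.ofLp = e3.ofLp := congrArg WithLp.ofLp hSe3
  have hA : ∀ M : Mat3, S.1 * (S.1ᵀ * M) = M := fun M => by
    rw [← mul_assoc, hSS, one_mul]
  have h1 : -a + g • mv ((seMul (seInv S) ξ.1).1)ᵀ e3 = -a + g • mv ξ.1.1ᵀ e3 := by
    simp [seMul, seInv, mv, Matrix.transpose_mul, ← Matrix.mulVec_mulVec, hSe3]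
  have h2 : ∀ i, seAct (seInv (seMul (seMul (seInv S) ξ.1) TC)) (seAct (seInv S) (ξ.2.2 i))
      = seAct (seInv (seMul ξ.1 TC)) (ξ.2.2 i) := by
    intro i
    simp only [seAct, seInv, seMul, mv, Matrix.transpose_mul, Matrix.transpose_transpose,
      mv_add', mv_sub', mv_neg', Matrix.mulVec_mulVec, Matrix.mul_assoc, hSS, hA,
      Matrix.mul_one, Matrix.one_mul, WithLp.ofLp_toLp, WithLp.ofLp_add, WithLp.ofLp_neg,
      Matrix.mulVec_add, Matrix.mulVec_neg, WithLp.toLp_add, WithLp.toLp_neg]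
    abel
  refine ⟨h1, h2, ?_⟩
  unfold Lam alpha
  refine Prod.ext rfl (Prod.ext h1 ?_)
  funext i
  simp only []
  rw [h2 i]
end
end
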